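/- Fix σ ∈ [0,1]. For all reals 0 < d ≤ c < u ≤ u', one has Φ^f(c,u) ≤ Φ^f(d,u') and Φ^g(c,u) ≤ Φ^g(d,u'); in particular, on any sub-interval [c,u] of [d,u'] the chord on the larger interval satisfies f̂(d,u',t) ≥ f̂(c,u,t) and ĝ(d,u',t) ≤ ĝ(c,u,t) for every t ∈ [c,u]. -/

import Mathlib

/-- f(t) = t^(σ-1) (real power). -/
noncomputable def fCNL (σ t : ℝ) : ℝ := t ^ (σ - 1)

/-- g(t) = t^σ (real power). -/
noncomputable def gCNL (σ t : ℝ) : ℝ := t ^ σ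

/-- Chord (linear interpolation) approximation of f on [c,u], evaluated at t. -/
noncomputable def fhat (σ c u t : ℝ) : ℝ :=
  fCNL σ c + ((fCNL σ u - fCNL σ c) / (u - c)) * (t - c)

/-- Chord (linear interpolation) approximation of g on [c,u], evaluated at t. -/
noncomputable def ghat (σ c u t : ℝ) : ℝ :=
  gCNL σ c + ((gCNL σ u - gCNL σ c) / (u - c)) * (t - c)

/-- Pointwise relative error of the chord approximation of f. -/
noncomputable def phiF (σ c u t : ℝ) : ℝ := (fhat σ c u t - fCNL σ t) / fCNL σ t

/-- Pointwise relative error of the chord approximation of g. -/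
noncomputable def phiG (σ c u t : ℝ) : ℝ := (gCNL σ t - ghat σ c u t) / gCNL σ t

/-- Maximum relative error of the chord approximation of f on [c,u]. -/
noncomputable def PhiF (σ c u : ℝ) : ℝ := sSup (phiF σ c u '' Set.Icc c u)

/-- Maximum relative error of the chord approximation of g on [c,u]. -/
noncomputable def PhiG (σ c u : ℝ) : ℝ := sSup (phiG σ c u '' Set.Icc c u)


open Set

/-- generic chord -/
noncomputable def lhat (F : ℝ → ℝ) (c u t : ℝ) : ℝ :=
  F c + ((F u - F c) / (u - c)) * (t - c)

lemma lhat_eq (F : ℝ → ℝ) {c u : ℝ} (hcu : c < u) (t : ℝ) :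
    lhat F c u t = ((u - t) / (u - c)) * F c + ((t - c) / (u - c)) * F u := by
  have h : u - c ≠ 0 := by linarith
  unfold lhat; field_simp; ring

lemma convex_below_chord {F : ℝ → ℝ} (hF : ConvexOn ℝ (Ioi 0) F)
    {c u t : ℝ} (hc : 0 < c) (hcu : c < u) (ht : t ∈ Icc c u) :
    F t ≤ lhat F c u t := by
  have h : (0:ℝ) < u - c := by linarith
  set a := (u - t) / (u - c) with ha_def
  set b := (t - c) / (u - c) with hb_def
  have ha : 0 ≤ a := by apply div_nonneg <;> [linarith [ht.2]; linarith]
  have hb : 0 ≤ b := by apply div_nonneg <;> [linarith [ht.1]; linarith]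
  have hab : a + b = 1 := by
    rw [ha_def, hb_def, ← add_div, div_eq_one_iff_eq (ne_of_gt h)]; ring
  have hcomb : a • c + b • u = t := by
    simp only [smul_eq_mul, ha_def, hb_def]; field_simp; ring
  have := hF.2 (mem_Ioi.2 hc) (mem_Ioi.2 (hc.trans hcu)) ha hb hab
  rw [hcomb] at this
  rw [lhat_eq F hcu]
  simpa [smul_eq_mul] using this

lemma chord_mono {F : ℝ → ℝ} (hF : ConvexOn ℝ (Ioi 0) F)
    {d c u u' t : ℝ} (hd : 0 < d) (hdc : d ≤ c) (hcu : c < u) (huu : u ≤ u')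
    (ht : t ∈ Icc c u) : lhat F c u t ≤ lhat F d u' t := by
  have hdu' : d < u' := lt_of_le_of_lt hdc (hcu.trans_le huu)
  have hc : 0 < c := hd.trans_le hdc
  have hFc : F c ≤ lhat F d u' c := convex_below_chord hF hd hdu' ⟨hdc, (hcu.le.trans huu)⟩
  have hFu : F u ≤ lhat F d u' u := convex_below_chord hF hd hdu' ⟨hdc.trans hcu.le, huu⟩
  have h : (0:ℝ) < u - c := by linarith
  have h' : u' - d ≠ 0 := by linarith
  set a := (u - t) / (u - c) with ha_def
  set b := (t - c) / (u - c) with hb_def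
  have ha : 0 ≤ a := by apply div_nonneg <;> [linarith [ht.2]; linarith]
  have hb : 0 ≤ b := by apply div_nonneg <;> [linarith [ht.1]; linarith]
  have hab : a + b = 1 := by
    rw [ha_def, hb_def, ← add_div, div_eq_one_iff_eq (ne_of_gt h)]; ring
  have hcomb : a * c + b * u = t := by
    simp only [ha_def, hb_def]; field_simp; ring
  have haff : lhat F d u' t = a * lhat F d u' c + b * lhat F d u' u := by
    unfold lhat
    rw [← hcomb]
    have e : a * (F d + (F u' - F d) / (u' - d) * (c - d))
        + b * (F d + (F u' - F d) / (u' - d) * (u - d))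
        = (a + b) * F d + (F u' - F d) / (u' - d) * (a * c + b * u - (a + b) * d) := by ring
    rw [e, hab]; ring
  rw [lhat_eq F hcu, haff]
  have := add_le_add (mul_le_mul_of_nonneg_left hFc ha) (mul_le_mul_of_nonneg_left hFu hb)
  simpa [ha_def, hb_def] using this

lemma convexOn_fCNL {σ : ℝ} (hσ1 : σ ≤ 1) : ConvexOn ℝ (Ioi 0) (fCNL σ) := by
  have hint : interior (Ioi (0:ℝ)) = Ioi 0 := interior_Ioi
  refine convexOn_of_hasDerivWithinAt2_nonneg (convex_Ioi 0)
    (f' := fun t => (σ - 1) * t ^ (σ - 2)) (f'' := fun t => (σ - 1) * ((σ - 2) * t ^ (σ - 3)))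
    ?_ ?_ ?_ ?_
  · intro t ht
    exact ((Real.continuousAt_rpow_const t (σ - 1) (Or.inl (ne_of_gt ht))).continuousWithinAt :)
  · rw [hint]
    intro t ht
    have := Real.hasDerivAt_rpow_const (x := t) (p := σ - 1) (Or.inl (ne_of_gt ht))
    have h2 : σ - 1 - 1 = σ - 2 := by ring
    rw [h2] at this
    exact this.hasDerivWithinAt
  · rw [hint]
    intro t ht
    have := (Real.hasDerivAt_rpow_const (x := t) (p := σ - 2) (Or.inl (ne_of_gt ht))).const_mul
      (σ - 1)
    have h2 : σ - 2 - 1 = σ - 3 := by ring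
    rw [h2] at this
    exact this.hasDerivWithinAt
  · rw [hint]
    intro t ht
    have h1 : (0:ℝ) < t ^ (σ - 3) := Real.rpow_pos_of_pos ht _
    show (0:ℝ) ≤ (σ - 1) * ((σ - 2) * t ^ (σ - 3))
    have h2 := mul_nonneg (mul_nonneg (by linarith : (0:ℝ) ≤ 1 - σ)
      (by linarith : (0:ℝ) ≤ 2 - σ)) h1.le
    nlinarith [h2]

lemma concaveOn_gCNL {σ : ℝ} (hσ0 : 0 ≤ σ) (hσ1 : σ ≤ 1) :
    ConcaveOn ℝ (Ioi 0) (gCNL σ) :=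
  (Real.concaveOn_rpow hσ0 hσ1).subset (fun x hx => mem_Ici.2 (le_of_lt hx)) (convex_Ioi 0)

lemma fhat_eq_lhat (σ c u t : ℝ) : fhat σ c u t = lhat (fCNL σ) c u t := rfl
lemma ghat_eq_neg_lhat (σ c u t : ℝ) : ghat σ c u t = -lhat (fun s => -gCNL σ s) c u t := by
  unfold ghat lhat; ring

lemma fCNL_pos {σ t : ℝ} (ht : 0 < t) : 0 < fCNL σ t := Real.rpow_pos_of_pos ht _
lemma gCNL_pos {σ t : ℝ} (ht : 0 < t) : 0 < gCNL σ t := Real.rpow_pos_of_pos ht _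

/-- Monotonicity of the maximum relative error under interval inclusion,
with the pointwise chord comparison on the sub-interval. -/
theorem stmt_6 (σ : ℝ) (hσ0 : 0 ≤ σ) (hσ1 : σ ≤ 1) :
    ∀ d c u u' : ℝ, 0 < d → d ≤ c → c < u → u ≤ u' →
      PhiF σ c u ≤ PhiF σ d u' ∧ PhiG σ c u ≤ PhiG σ d u' ∧
      ∀ t ∈ Set.Icc c u, fhat σ c u t ≤ fhat σ d u' t ∧ ghat σ d u' t ≤ ghat σ c u t := by
  intro d c u u' hd hdc hcu huu
  have hdu' : d < u' := lt_of_le_of_lt hdc (hcu.trans_le huu)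
  have hsub : Icc c u ⊆ Icc d u' := Icc_subset_Icc hdc huu
  have hFconv := convexOn_fCNL hσ1
  have hGconv : ConvexOn ℝ (Ioi 0) (fun s => -gCNL σ s) := (concaveOn_gCNL hσ0 hσ1).neg
  have hfhat : ∀ t ∈ Icc c u, fhat σ c u t ≤ fhat σ d u' t := by
    intro t ht
    rw [fhat_eq_lhat, fhat_eq_lhat]
    exact chord_mono hFconv hd hdc hcu huu ht
  have hghat : ∀ t ∈ Icc c u, ghat σ d u' t ≤ ghat σ c u t := by
    intro t ht
    rw [ghat_eq_neg_lhat, ghat_eq_neg_lhat]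
    exact neg_le_neg (chord_mono hGconv hd hdc hcu huu ht)
  have hphiF : ∀ t ∈ Icc c u, phiF σ c u t ≤ phiF σ d u' t := by
    intro t ht
    have htpos : 0 < t := lt_of_lt_of_le hd (hsub ht).1
    have := fCNL_pos (σ := σ) htpos
    unfold phiF
    gcongr
    exact hfhat t ht
  have hphiG : ∀ t ∈ Icc c u, phiG σ c u t ≤ phiG σ d u' t := by
    intro t ht
    have htpos : 0 < t := lt_of_lt_of_le hd (hsub ht).1
    have := gCNL_pos (σ := σ) htpos
    unfold phiG
    gcongr
    exact hghat t ht
  have hfc : ContinuousOn (fCNL σ) (Icc d u') := fun t ht =>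
    (Real.continuousAt_rpow_const t (σ - 1)
      (Or.inl (ne_of_gt (lt_of_lt_of_le hd ht.1)))).continuousWithinAt
  have hgc : ContinuousOn (gCNL σ) (Icc d u') := fun t ht =>
    (Real.continuousAt_rpow_const t σ
      (Or.inl (ne_of_gt (lt_of_lt_of_le hd ht.1)))).continuousWithinAt
  have hfhatc : ContinuousOn (fun t => fhat σ d u' t) (Icc d u') := by
    unfold fhat
    exact (continuous_const.add (continuous_const.mul
      (continuous_id.sub continuous_const))).continuousOn
  have hghatc : ContinuousOn (fun t => ghat σ d u' t) (Icc d u') := by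
    unfold ghat
    exact (continuous_const.add (continuous_const.mul
      (continuous_id.sub continuous_const))).continuousOn
  have hFcont : ContinuousOn (phiF σ d u') (Icc d u') := by
    unfold phiF
    exact (hfhatc.sub hfc).div hfc
      (fun t ht => ne_of_gt (fCNL_pos (lt_of_lt_of_le hd ht.1)))
  have hGcont : ContinuousOn (phiG σ d u') (Icc d u') := by
    unfold phiG
    exact (hgc.sub hghatc).div hgc
      (fun t ht => ne_of_gt (gCNL_pos (lt_of_lt_of_le hd ht.1)))
  have hbddF : BddAbove (phiF σ d u' '' Icc d u') :=
    (isCompact_Icc.image_of_continuousOn hFcont).bddAbove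
  have hbddG : BddAbove (phiG σ d u' '' Icc d u') :=
    (isCompact_Icc.image_of_continuousOn hGcont).bddAbove
  have hne : (Icc c u).Nonempty := nonempty_Icc.2 hcu.le
  refine ⟨?_, ?_, fun t ht => ⟨hfhat t ht, hghat t ht⟩⟩
  · apply csSup_le (hne.image _)
    rintro x ⟨t, ht, rfl⟩
    exact (hphiF t ht).trans (le_csSup hbddF ⟨t, hsub ht, rfl⟩)
  · apply csSup_le (hne.image _)
    rintro x ⟨t, ht, rfl⟩
    exact (hphiG t ht).trans (le_csSup hbddG ⟨t, hsub ht, rfl⟩)
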